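/- $\lim_{e_1 \to 0^+} \frac{J_+(e_1,0)}{e_1} = \frac{\pi}{4}$, where $J_+(e_1,0) = \int_0^{e_1} \frac{f\,df}{\sqrt{-\frac{2}{3}(f-e_1)f(f+6+e_1)}}$. -/

import Mathlib

open Real Set Filter

open MeasureTheory

noncomputable def Lfun (g : ℝ) : ℝ := g / Real.sqrt (4 * g * (1 - g))

lemma Lfun_integrable : IntervalIntegrable Lfun volume 0 1 := by
  have hmaj : IntervalIntegrable (fun x : ℝ => (1 - x) ^ (-(1/2:ℝ))) volume 0 1 := by
    have h := (intervalIntegral.intervalIntegrable_rpow' (r := -(1/2:ℝ)) (by norm_num)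
      (a := 0) (b := 1)).comp_sub_left 1
    simpa using h.symm
  refine hmaj.mono_fun ?_ ?_
  · exact (measurable_id.div
      ((Real.continuous_sqrt.comp (by continuity)).measurable)).aestronglyMeasurable
  · rw [Filter.EventuallyLE, ae_restrict_iff' measurableSet_uIoc]
    filter_upwards with g hg
    rw [Set.uIoc_of_le (by norm_num : (0:ℝ) ≤ 1)] at hg
    obtain ⟨hg0, hg1⟩ := hg
    have h1g : (0:ℝ) ≤ 1 - g := by linarith
    have hrw : (1 - g) ^ (-(1/2:ℝ)) = 1 / Real.sqrt (1 - g) := by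
      rw [Real.rpow_neg h1g, ← Real.sqrt_eq_rpow, inv_eq_one_div]
    have hs4 : Real.sqrt (4 * g * (1 - g)) = 2 * (Real.sqrt g * Real.sqrt (1 - g)) := by
      rw [show (4:ℝ) * g * (1 - g) = 2^2 * (g * (1 - g)) by ring,
        Real.sqrt_mul (by positivity), Real.sqrt_sq (by norm_num),
        Real.sqrt_mul hg0.le]
    simp only [Lfun, Real.norm_eq_abs, hrw]
    rw [abs_of_nonneg (div_nonneg hg0.le (Real.sqrt_nonneg _)),
      abs_of_nonneg (by positivity)]
    rcases eq_or_lt_of_le hg1 with h | h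
    · simp [← h]
    · have hsg : 0 < Real.sqrt g := Real.sqrt_pos.mpr hg0
      have hs1g : 0 < Real.sqrt (1 - g) := Real.sqrt_pos.mpr (by linarith)
      have hgsq : g = Real.sqrt g * Real.sqrt g := (Real.mul_self_sqrt hg0.le).symm
      rw [hs4]
      have hsgle : Real.sqrt g ≤ 1 := by
        rw [show (1:ℝ) = Real.sqrt 1 by simp]
        exact Real.sqrt_le_sqrt hg1
      rw [div_le_div_iff₀ (by positivity) hs1g]
      have h2 : g ≤ 2 * Real.sqrt g := by nlinarith
      have := mul_le_mul_of_nonneg_right h2 hs1g.le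
      nlinarith

lemma Lfun_integral : ∫ g in (0:ℝ)..1, Lfun g = π/4 := by
  have hder : ∀ x ∈ Ioo (0:ℝ) 1, HasDerivWithinAt
      (fun y => (Real.arcsin (Real.sqrt y) - Real.sqrt (y * (1 - y))) / 2)
      (Lfun x) (Ioi x) x := by
    intro x hx
    obtain ⟨hx0, hx1⟩ := hx
    have hsg : 0 < Real.sqrt x := Real.sqrt_pos.mpr hx0
    have hs1 : 0 < Real.sqrt (1 - x) := Real.sqrt_pos.mpr (by linarith)
    have hsqlt : Real.sqrt x < 1 := by
      have := Real.sqrt_lt_sqrt hx0.le hx1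
      simpa using this
    have hs : HasDerivAt Real.sqrt (1 / (2 * Real.sqrt x)) x := Real.hasDerivAt_sqrt hx0.ne'
    have harc : HasDerivAt Real.arcsin (1 / Real.sqrt (1 - Real.sqrt x ^ 2)) (Real.sqrt x) :=
      Real.hasDerivAt_arcsin (by nlinarith) hsqlt.ne
    have hcomp : HasDerivAt (fun y => Real.arcsin (Real.sqrt y))
        (1 / Real.sqrt (1 - x) * (1 / (2 * Real.sqrt x))) x := by
      have := harc.comp x hs
      rwa [Real.sq_sqrt hx0.le] at this
    have hinner : HasDerivAt (fun y : ℝ => y * (1 - y)) (1 - 2 * x) x := by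
      have := (hasDerivAt_id x).mul ((hasDerivAt_const x (1:ℝ)).sub (hasDerivAt_id x))
      rw [show (1 - 2 * x) = 1 * (1 - x) + x * (0 - 1) by ring]
      exact this
    have hsq : HasDerivAt (fun y => Real.sqrt (y * (1 - y)))
        ((1 - 2 * x) / (2 * Real.sqrt (x * (1 - x)))) x := by
      have h0 : x * (1 - x) ≠ 0 := ne_of_gt (by nlinarith)
      have := (Real.hasDerivAt_sqrt h0).comp x hinner
      rw [show (1 - 2 * x) / (2 * Real.sqrt (x * (1 - x))) = 1 / (2 * Real.sqrt (x * (1 - x))) * (1 - 2 * x) by ring]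
      exact this
    have htot := (hcomp.sub hsq).div_const 2
    have hmul : Real.sqrt (x * (1 - x)) = Real.sqrt x * Real.sqrt (1 - x) :=
      Real.sqrt_mul hx0.le _
    have h4 : Real.sqrt (4 * x * (1 - x)) = 2 * (Real.sqrt x * Real.sqrt (1 - x)) := by
      rw [show (4:ℝ) * x * (1 - x) = 2^2 * (x * (1 - x)) by ring,
        Real.sqrt_mul (by positivity), Real.sqrt_sq (by norm_num), hmul]
    have hval : (1 / Real.sqrt (1 - x) * (1 / (2 * Real.sqrt x))
        - (1 - 2 * x) / (2 * Real.sqrt (x * (1 - x)))) / 2 = Lfun x := by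
      rw [hmul, Lfun, h4]
      have hx' : x = Real.sqrt x * Real.sqrt x := (Real.mul_self_sqrt hx0.le).symm
      have h1x' : 1 - x = Real.sqrt (1 - x) * Real.sqrt (1 - x) :=
        (Real.mul_self_sqrt (by linarith)).symm
      field_simp
      nlinarith [hsg, hs1]
    rw [← hval]
    exact htot.hasDerivWithinAt
  have hcont : ContinuousOn
      (fun y => (Real.arcsin (Real.sqrt y) - Real.sqrt (y * (1 - y))) / 2) (Icc 0 1) := by
    exact (((Real.continuous_arcsin.comp Real.continuous_sqrt).sub
      (Real.continuous_sqrt.comp (by continuity))).div_const 2).continuousOn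
  have := intervalIntegral.integral_eq_sub_of_hasDeriv_right_of_le (by norm_num) hcont
    hder Lfun_integrable
  rw [this]
  simp [Real.arcsin_one]
  ring

noncomputable def Ffun (e1 g : ℝ) : ℝ := g / Real.sqrt (2/3 * g * (1 - g) * (e1 * g + 6 + e1))

lemma key_tendsto : Tendsto (fun e1 : ℝ => ∫ g in (0:ℝ)..1, Ffun e1 g)
    (nhdsWithin 0 (Set.Ioi 0)) (nhds (∫ g in (0:ℝ)..1, Lfun g)) := by
  apply intervalIntegral.tendsto_integral_filter_of_dominated_convergence Lfun
  · filter_upwards with e1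
    exact (measurable_id.div
      ((Real.continuous_sqrt.comp (by continuity)).measurable)).aestronglyMeasurable
  · filter_upwards [self_mem_nhdsWithin] with e1 he1
    filter_upwards with g hg
    rw [Set.uIoc_of_le (by norm_num : (0:ℝ) ≤ 1)] at hg
    obtain ⟨hg0, hg1⟩ := hg
    rw [Set.mem_Ioi] at he1
    have hF0 : 0 ≤ Ffun e1 g := div_nonneg hg0.le (Real.sqrt_nonneg _)
    rw [Real.norm_eq_abs, abs_of_nonneg hF0]
    rcases eq_or_lt_of_le hg1 with h | h
    · simp [Ffun, Lfun, ← h]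
    · have hpos : 0 < Real.sqrt (4 * g * (1 - g)) :=
        Real.sqrt_pos.mpr (by nlinarith)
      have hle : Real.sqrt (4 * g * (1 - g)) ≤
          Real.sqrt (2/3 * g * (1 - g) * (e1 * g + 6 + e1)) :=
        Real.sqrt_le_sqrt (by nlinarith [mul_pos (mul_pos hg0 (by linarith : (0:ℝ) < 1 - g)) (by nlinarith : (0:ℝ) < e1 * g + e1)])
      exact div_le_div_of_nonneg_left hg0.le hpos hle
  · exact Lfun_integrable
  · filter_upwards with g hg
    rw [Set.uIoc_of_le (by norm_num : (0:ℝ) ≤ 1)] at hg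
    obtain ⟨hg0, hg1⟩ := hg
    rcases eq_or_lt_of_le hg1 with h | h
    · simp only [Ffun, Lfun, ← h]
      norm_num
    · have hcont : ContinuousAt
          (fun e1 : ℝ => g / Real.sqrt (2/3 * g * (1 - g) * (e1 * g + 6 + e1))) 0 := by
        apply ContinuousAt.div continuousAt_const
        · exact (Real.continuous_sqrt.comp (by continuity)).continuousAt
        · have : (0:ℝ) < 2/3 * g * (1 - g) * (0 * g + 6 + 0) := by nlinarith
          exact ne_of_gt (Real.sqrt_pos.mpr this)
      have := hcont.tendsto.mono_left (nhdsWithin_le_nhds (s := Set.Ioi (0:ℝ)))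
      have heq : 2/3 * g * (1 - g) * (0 * g + 6 + 0) = 4 * g * (1 - g) := by ring
      rw [heq] at this
      exact this

lemma subst_eq (e1 : ℝ) (he : 0 < e1) :
    (∫ f in (0:ℝ)..e1, f / Real.sqrt (-(2/3) * (f - e1) * f * (f + 6 + e1))) / e1
      = ∫ g in (0:ℝ)..1, Ffun e1 g := by
  have h1 : (∫ g in (0:ℝ)..1,
        (fun f => f / Real.sqrt (-(2/3) * (f - e1) * f * (f + 6 + e1))) (e1 * g))
      = e1⁻¹ • ∫ f in (e1*0)..(e1*1), f / Real.sqrt (-(2/3) * (f - e1) * f * (f + 6 + e1)) :=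
    intervalIntegral.integral_comp_mul_left
      (fun f => f / Real.sqrt (-(2/3) * (f - e1) * f * (f + 6 + e1))) he.ne'
  rw [mul_zero, mul_one, smul_eq_mul] at h1
  have h2 : (∫ g in (0:ℝ)..1,
        (fun f => f / Real.sqrt (-(2/3) * (f - e1) * f * (f + 6 + e1))) (e1 * g))
      = ∫ g in (0:ℝ)..1, Ffun e1 g := by
    apply intervalIntegral.integral_congr
    intro g hg
    rw [Set.uIcc_of_le (by norm_num : (0:ℝ) ≤ 1), Set.mem_Icc] at hg
    obtain ⟨hg0, hg1⟩ := hg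
    simp only [Ffun]
    have hinner : -(2/3) * (e1 * g - e1) * (e1 * g) * (e1 * g + 6 + e1)
        = e1^2 * (2/3 * g * (1 - g) * (e1 * g + 6 + e1)) := by ring
    rw [hinner, Real.sqrt_mul (sq_nonneg e1), Real.sqrt_sq he.le,
      mul_div_mul_left _ _ he.ne']
  rw [div_eq_inv_mul, ← h1, h2]

/-- `lim_{e1 → 0⁺} J₊(e1, 0)/e1 = π/4`. -/
theorem Jplus_zero_div_tendsto :
    Filter.Tendsto
      (fun e1 : ℝ =>
        (∫ f in (0:ℝ)..e1,
          f / Real.sqrt (-(2/3) * (f - e1) * f * (f + 6 + e1))) / e1)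
      (nhdsWithin 0 (Set.Ioi 0)) (nhds (π / 4)) := by
  have h := key_tendsto
  rw [Lfun_integral] at h
  apply h.congr'
  filter_upwards [self_mem_nhdsWithin] with e1 he1
  exact (subst_eq e1 he1).symm
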